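/- Let p ∈ U and let m denote the number of equivalence classes of the relation ∼_p on V (one always has m ≥ 2). Then the dimension of the affine span of the open cell C(p) equals m − 2; that is, the rank of the ℝ-vector space spanned by the differences of points of C(p) is m − 2. -/

import Mathlib

open Finset

/-- The vertex-induced subgraph on `S` of the multigraph with edge-multiplicity
function `μ` is connected: any two vertices of `S` are joined by a walk inside `S`. -/
def ConnectedOn {n : ℕ} (μ : Fin (n + 1) → Fin (n + 1) → ℕ) (S : Set (Fin (n + 1))) : Prop :=
  ∀ i ∈ S, ∀ j ∈ S, Relation.ReflTransGen (fun a b => a ∈ S ∧ b ∈ S ∧ 1 ≤ μ a b) i j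

/-- The affine subspace `U = { x ∈ ℝ^{n+1} : x_{n+1} = 0, x_1 + ⋯ + x_n = 1 }`. -/
def U (n : ℕ) : Set (Fin (n + 1) → ℝ) :=
  {x | x (Fin.last n) = 0 ∧ ∑ i : Fin n, x i.castSucc = 1}

/-- The open cell of `p` in the restriction of the graphical arrangement of `μ` to `U`. -/
def openCell {n : ℕ} (μ : Fin (n + 1) → Fin (n + 1) → ℕ) (p : Fin (n + 1) → ℝ) :
    Set (Fin (n + 1) → ℝ) :=
  {q | q ∈ U n ∧ ∀ i j, 1 ≤ μ i j →
    ((q i < q j ↔ p i < p j) ∧ (q i = q j ↔ p i = p j))}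

/-- The closed cell of `p` in the restriction of the graphical arrangement of `μ` to `U`. -/
def closedCell {n : ℕ} (μ : Fin (n + 1) → Fin (n + 1) → ℕ) (p : Fin (n + 1) → ℝ) :
    Set (Fin (n + 1) → ℝ) :=
  {q | q ∈ U n ∧ ∀ i j, 1 ≤ μ i j →
    ((p i < p j → q i ≤ q j) ∧ (p i = p j → q i = q j))}

/-- `p`-equivalence: `i ∼_p j` iff there is a path in the graph along which `p` is constant. -/
def pEquiv {n : ℕ} (μ : Fin (n + 1) → Fin (n + 1) → ℕ) (p : Fin (n + 1) → ℝ)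
    (i j : Fin (n + 1)) : Prop :=
  Relation.ReflTransGen (fun a b => 1 ≤ μ a b ∧ p a = p b) i j

/-- `d_I(i)`: the number of edges from vertex `i` to the complement of `I`. -/
def dI {n : ℕ} (μ : Fin (n + 1) → Fin (n + 1) → ℕ) (I : Finset (Fin (n + 1)))
    (i : Fin (n + 1)) : ℕ :=
  ∑ j ∈ Iᶜ, μ i j

/-- `ε_I(i) = d_I(i)` for `i ∈ I` and `0` otherwise. -/
def epsI {n : ℕ} (μ : Fin (n + 1) → Fin (n + 1) → ℕ) (I : Finset (Fin (n + 1)))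
    (i : Fin (n + 1)) : ℕ :=
  if i ∈ I then dI μ I i else 0

/-- The point `(1/|I|) · e_I`, where `e_I` is the 0/1 indicator vector of `I`. -/
noncomputable def qI {n : ℕ} (I : Finset (Fin (n + 1))) : Fin (n + 1) → ℝ :=
  fun i => if i ∈ I then 1 / (I.card : ℝ) else 0

/-- `D_i(p)`: the number of edges `ij` with `p_i > p_j`. -/
noncomputable def Dlab {n : ℕ} (μ : Fin (n + 1) → Fin (n + 1) → ℕ) (p : Fin (n + 1) → ℝ) (i : Fin n) : ℕ :=
  ∑ j ∈ Finset.univ.filter (fun j => p j < p i.castSucc), μ i.castSucc j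

/-- The monomial `m_I = ∏_{i ∈ [n]} x_i^{ε_I(i)}`. -/
noncomputable def mI {n : ℕ} (k : Type*) [Field k] (μ : Fin (n + 1) → Fin (n + 1) → ℕ)
    (I : Finset (Fin (n + 1))) : MvPolynomial (Fin n) k :=
  ∏ i : Fin n, MvPolynomial.X i ^ epsI μ I i.castSucc

/-- The monomial ideal `M_G = ⟨ m_I : ∅ ≠ I ⊆ [n] ⟩`. -/
noncomputable def MG {n : ℕ} (k : Type*) [Field k] (μ : Fin (n + 1) → Fin (n + 1) → ℕ) :
    Ideal (MvPolynomial (Fin n) k) :=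
  Ideal.span {f | ∃ I : Finset (Fin (n + 1)), I.Nonempty ∧ Fin.last n ∉ I ∧ f = mI k μ I}


section StmtAux


variable {n : ℕ} {μ : Fin (n + 1) → Fin (n + 1) → ℕ} {p : Fin (n + 1) → ℝ}

lemma pEquiv_apply_eq {i j : Fin (n + 1)} (h : pEquiv μ p i j) : p i = p j := by
  induction h with
  | refl => rfl
  | tail _ hstep ih => exact ih.trans hstep.2

lemma pEquiv_equivalence (hsym : ∀ i j, μ i j = μ j i) : Equivalence (pEquiv μ p) where
  refl _ := Relation.ReflTransGen.refl
  symm h := (@Relation.ReflTransGen.symmetric _ _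
    ⟨fun a b hab => ⟨by rw [hsym]; exact hab.1, hab.2.symm⟩⟩).symm _ _ h
  trans h1 h2 := h1.trans h2

/-- The candidate direction space of the affine span of the open cell. -/
def V0 (μ : Fin (n + 1) → Fin (n + 1) → ℕ) (p : Fin (n + 1) → ℝ) :
    Submodule ℝ (Fin (n + 1) → ℝ) where
  carrier := {v | (∀ i j, pEquiv μ p i j → v i = v j) ∧ v (Fin.last n) = 0 ∧
    ∑ i : Fin (n + 1), v i = 0}
  add_mem' := by
    rintro a b ⟨ha1, ha2, ha3⟩ ⟨hb1, hb2, hb3⟩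
    exact ⟨fun i j h => by simp only [Pi.add_apply, ha1 i j h, hb1 i j h],
      by simp [ha2, hb2], by simp [Finset.sum_add_distrib, ha3, hb3]⟩
  zero_mem' := ⟨fun _ _ _ => rfl, rfl, by simp⟩
  smul_mem' := by
    rintro c a ⟨h1, h2, h3⟩
    exact ⟨fun i j h => by simp [h1 i j h], by simp [h2], by simp [← Finset.mul_sum, h3]⟩

lemma mem_V0_iff {v : Fin (n + 1) → ℝ} :
    v ∈ V0 μ p ↔ (∀ i j, pEquiv μ p i j → v i = v j) ∧ v (Fin.last n) = 0 ∧
      ∑ i : Fin (n + 1), v i = 0 := Iff.rfl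

lemma U_sum {q : Fin (n + 1) → ℝ} (hq : q ∈ U n) : ∑ i : Fin (n + 1), q i = 1 := by
  rw [Fin.sum_univ_castSucc, hq.1, hq.2, add_zero]

lemma openCell_const {q : Fin (n + 1) → ℝ} (hq : q ∈ openCell μ p) {i j : Fin (n + 1)}
    (h : pEquiv μ p i j) : q i = q j := by
  induction h with
  | refl => rfl
  | tail _ hstep ih => exact ih.trans ((hq.2 _ _ hstep.1).2.mpr hstep.2)

lemma exists_eps (μ : Fin (n + 1) → Fin (n + 1) → ℕ) (p v : Fin (n + 1) → ℝ) :
    ∃ ε : ℝ, 0 < ε ∧ ∀ i j, 1 ≤ μ i j → p i < p j →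
      p i + ε * v i < p j + ε * v j := by
  set A : Set ℝ := ⋂ ij : Fin (n + 1) × Fin (n + 1),
    {t : ℝ | 1 ≤ μ ij.1 ij.2 → p ij.1 < p ij.2 →
      p ij.1 + t * v ij.1 < p ij.2 + t * v ij.2} with hA
  have hopen : IsOpen A := by
    apply isOpen_iInter_of_finite
    rintro ⟨i, j⟩
    by_cases h : 1 ≤ μ i j ∧ p i < p j
    · have he : {t : ℝ | 1 ≤ μ i j → p i < p j → p i + t * v i < p j + t * v j}
          = {t : ℝ | p i + t * v i < p j + t * v j} := by
        ext t; simp [h.1, h.2]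
      rw [he]
      exact isOpen_lt (by fun_prop) (by fun_prop)
    · have he : {t : ℝ | 1 ≤ μ i j → p i < p j → p i + t * v i < p j + t * v j}
          = Set.univ := by
        ext t
        simp only [Set.mem_setOf_eq, Set.mem_univ, iff_true]
        intro h1 h2; exact absurd ⟨h1, h2⟩ h
      rw [he]; exact isOpen_univ
  have h0 : (0 : ℝ) ∈ A := by
    rw [hA, Set.mem_iInter]
    rintro ⟨i, j⟩
    intro _ h2
    simpa using h2
  obtain ⟨δ, hδ, hball⟩ := Metric.isOpen_iff.mp hopen 0 h0
  refine ⟨δ / 2, by positivity, ?_⟩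
  have hmem : δ / 2 ∈ A := by
    apply hball
    simp only [Metric.mem_ball, dist_zero_right, Real.norm_eq_abs]
    rw [abs_of_pos (by positivity)]
    linarith
  rw [hA, Set.mem_iInter] at hmem
  intro i j h1 h2
  exact hmem (i, j) h1 h2

lemma vectorSpan_openCell_eq (hsym : ∀ i j, μ i j = μ j i) (hp : p ∈ U n) :
    vectorSpan ℝ (openCell μ p) = V0 μ p := by
  apply le_antisymm
  · rw [vectorSpan_def, Submodule.span_le]
    intro w hw
    rw [Set.mem_vsub] at hw
    obtain ⟨x, hx, y, hy, rfl⟩ := hw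
    refine ⟨fun i j h => ?_, ?_, ?_⟩
    · simp only [vsub_eq_sub, Pi.sub_apply, openCell_const hx h, openCell_const hy h]
    · simp only [vsub_eq_sub, Pi.sub_apply, hx.1.1, hy.1.1, sub_zero]
    · simp only [vsub_eq_sub, Pi.sub_apply]
      rw [Finset.sum_sub_distrib, U_sum hx.1, U_sum hy.1, sub_self]
  · intro v hv
    obtain ⟨hv1, hv2, hv3⟩ := hv
    obtain ⟨ε, hε, hkey⟩ := exists_eps μ p v
    have hvsum : ∑ i : Fin n, v i.castSucc = 0 := by
      have := hv3
      rw [Fin.sum_univ_castSucc, hv2, add_zero] at this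
      exact this
    have hpcell : p ∈ openCell μ p := ⟨hp, fun i j _ => ⟨Iff.rfl, Iff.rfl⟩⟩
    have hqcell : p + ε • v ∈ openCell μ p := by
      refine ⟨⟨by simp [hp.1, hv2], ?_⟩, ?_⟩
      · simp only [Pi.add_apply, Pi.smul_apply, smul_eq_mul, Finset.sum_add_distrib,
          ← Finset.mul_sum, hp.2, hvsum, mul_zero, add_zero]
      · intro i j hij
        have hqi : (p + ε • v) i = p i + ε * v i := rfl
        have hqj : (p + ε • v) j = p j + ε * v j := rfl
        rcases lt_trichotomy (p i) (p j) with h | h | h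
        · have hlt := hkey i j hij h
          rw [hqi, hqj]
          exact ⟨iff_of_true hlt h, iff_of_false (ne_of_lt hlt) (ne_of_lt h)⟩
        · have hvij : v i = v j := hv1 i j (Relation.ReflTransGen.single ⟨hij, h⟩)
          have hqeq : (p + ε • v) i = (p + ε • v) j := by rw [hqi, hqj, h, hvij]
          exact ⟨iff_of_false (by rw [hqeq]; exact lt_irrefl _)
            (by rw [h]; exact lt_irrefl _), iff_of_true hqeq h⟩
        · have hlt := hkey j i (by rw [hsym]; exact hij) h
          rw [hqi, hqj]
          exact ⟨iff_of_false (lt_asymm hlt) (lt_asymm h),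
            iff_of_false (ne_of_gt hlt) (ne_of_gt h)⟩
    have hmem : (p + ε • v) -ᵥ p ∈ vectorSpan ℝ (openCell μ p) :=
      vsub_mem_vectorSpan ℝ hqcell hpcell
    have := Submodule.smul_mem _ ε⁻¹ hmem
    rwa [vsub_eq_sub, add_sub_cancel_left, smul_smul, inv_mul_cancel₀ hε.ne', one_smul]
      at this


/-- Composition with the quotient map, as a linear map. -/
def Psi (s : Setoid (Fin (n + 1))) : (Quotient s → ℝ) →ₗ[ℝ] (Fin (n + 1) → ℝ) where
  toFun f i := f (Quotient.mk s i)
  map_add' _ _ := rfl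
  map_smul' _ _ := rfl

@[simp] lemma Psi_apply (s : Setoid (Fin (n + 1))) (f : Quotient s → ℝ) (i : Fin (n + 1)) :
    Psi s f i = f (Quotient.mk s i) := rfl

/-- The pair of linear constraints cutting out (the direction of) `U`. -/
def Lmap (s : Setoid (Fin (n + 1))) : (Quotient s → ℝ) →ₗ[ℝ] ℝ × ℝ where
  toFun f := (f (Quotient.mk s (Fin.last n)), ∑ i : Fin (n + 1), f (Quotient.mk s i))
  map_add' f g := by simp [Finset.sum_add_distrib, Prod.ext_iff]
  map_smul' c f := by simp [Finset.mul_sum, Prod.ext_iff]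

@[simp] lemma Lmap_apply (s : Setoid (Fin (n + 1))) (f : Quotient s → ℝ) :
    Lmap s f = (f (Quotient.mk s (Fin.last n)), ∑ i : Fin (n + 1), f (Quotient.mk s i)) := rfl

lemma finrank_V0 (hsym : ∀ i j, μ i j = μ j i) (hp : p ∈ U n)
    (m : ℕ) (hm : m = (Set.range fun i : Fin (n + 1) => {j | pEquiv μ p i j}).ncard) :
    2 ≤ m ∧ Module.finrank ℝ (V0 μ p) = m - 2 := by
  classical
  set s : Setoid (Fin (n + 1)) := ⟨pEquiv μ p, pEquiv_equivalence hsym⟩ with hs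
  haveI : Fintype (Quotient s) := Fintype.ofFinite _
  have hresp : ∀ a b : Fin (n + 1), pEquiv μ p a b →
      {j | pEquiv μ p a j} = {j | pEquiv μ p b j} := by
    intro a b h
    ext j
    exact ⟨fun hj => ((pEquiv_equivalence hsym).symm h).trans hj, fun hj => h.trans hj⟩
  set φ : Quotient s → Set (Fin (n + 1)) := Quotient.lift (fun i => {j | pEquiv μ p i j})
    hresp with hφ
  have hφinj : Function.Injective φ := by
    intro a b
    induction a using Quotient.ind with | _ a =>
    induction b using Quotient.ind with | _ b =>
    intro hab
    have hbmem : b ∈ {j | pEquiv μ p b j} := Relation.ReflTransGen.refl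
    have : b ∈ {j | pEquiv μ p a j} := by
      rw [show ({j | pEquiv μ p a j} : Set _) = {j | pEquiv μ p b j} from hab]
      exact hbmem
    exact Quotient.sound this
  have hrange : (Set.range fun i : Fin (n + 1) => {j | pEquiv μ p i j}) = Set.range φ := by
    have hsurj : Function.Surjective (Quotient.mk s) := Quotient.mk_surjective
    rw [← hsurj.range_comp φ]
    rfl
  have hmcard : m = Fintype.card (Quotient s) := by
    rw [hm, hrange, ← Set.image_univ, Set.ncard_image_of_injective _ hφinj,
      Set.ncard_univ, Nat.card_eq_fintype_card]
  obtain ⟨i₀, -, hi₀⟩ : ∃ i ∈ Finset.univ, p (Fin.castSucc i) ≠ 0 := by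
    apply Finset.exists_ne_zero_of_sum_ne_zero
    rw [hp.2]; exact one_ne_zero
  have hne : Quotient.mk s (Fin.castSucc i₀) ≠ Quotient.mk s (Fin.last n) := by
    intro h
    exact hi₀ (by rw [pEquiv_apply_eq (Quotient.exact h), hp.1])
  have hm2 : 2 ≤ m := by
    rw [hmcard]
    exact Fintype.one_lt_card_iff.mpr ⟨_, _, hne⟩
  refine ⟨hm2, ?_⟩
  have hmaps : ∀ f ∈ LinearMap.ker (Lmap s), Psi s f ∈ V0 μ p := by
    intro f hf
    rw [LinearMap.mem_ker] at hf
    have h1 : f (Quotient.mk s (Fin.last n)) = 0 := congrArg Prod.fst hf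
    have h2 : ∑ i : Fin (n + 1), f (Quotient.mk s i) = 0 := congrArg Prod.snd hf
    exact ⟨fun i j h => by simp only [Psi_apply]; rw [Quotient.sound (s := s) h], h1, h2⟩
  set e : LinearMap.ker (Lmap s) →ₗ[ℝ] V0 μ p := (Psi s).restrict hmaps with he
  have hbij : Function.Bijective e := by
    constructor
    · intro x y hxy
      have hxy' : Psi s x.1 = Psi s y.1 := congrArg Subtype.val hxy
      apply Subtype.ext
      funext t
      induction t using Quotient.ind with | _ i =>
      exact congrFun hxy' i
    · rintro ⟨v, hv1, hv2, hv3⟩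
      set f : Quotient s → ℝ := Quotient.lift v (fun a b h => hv1 a b h) with hf
      have hfker : f ∈ LinearMap.ker (Lmap s) := by
        rw [LinearMap.mem_ker, Lmap_apply]
        exact Prod.ext_iff.mpr ⟨hv2, hv3⟩
      exact ⟨⟨f, hfker⟩, Subtype.ext (funext fun i => rfl)⟩
  have hLsurj : Function.Surjective (Lmap s) := by
    rintro ⟨a, b⟩
    set t₁ : Quotient s := Quotient.mk s (Fin.last n) with ht₁
    set t₂ : Quotient s := Quotient.mk s (Fin.castSucc i₀) with ht₂
    set N₁ : ℝ := ((Finset.univ.filter fun i : Fin (n + 1) =>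
      Quotient.mk s i = t₁).card : ℝ) with hN₁
    set N₂ : ℝ := ((Finset.univ.filter fun i : Fin (n + 1) =>
      Quotient.mk s i = t₂).card : ℝ) with hN₂
    have hN₂pos : 0 < (Finset.univ.filter fun i : Fin (n + 1) =>
        Quotient.mk s i = t₂).card := by
      apply Finset.card_pos.mpr
      exact ⟨Fin.castSucc i₀, Finset.mem_filter.mpr ⟨Finset.mem_univ _, ht₂.symm⟩⟩
    have hN₂ne : N₂ ≠ 0 := by
      rw [hN₂]; exact_mod_cast hN₂pos.ne'
    set y : ℝ := (b - a * N₁) / N₂ with hy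
    refine ⟨fun t => if t = t₁ then a else if t = t₂ then y else 0, ?_⟩
    rw [Lmap_apply, Prod.ext_iff]
    constructor
    · exact if_pos rfl
    · show (∑ i : Fin (n + 1),
        if Quotient.mk s i = t₁ then a else if Quotient.mk s i = t₂ then y else 0) = b
      rw [Finset.sum_ite, Finset.sum_ite, Finset.sum_const, Finset.sum_const,
        Finset.sum_const, Finset.filter_filter]
      have hfe : (Finset.univ.filter fun i : Fin (n + 1) =>
          ¬Quotient.mk s i = t₁ ∧ Quotient.mk s i = t₂)
          = Finset.univ.filter fun i : Fin (n + 1) => Quotient.mk s i = t₂ := by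
        apply Finset.filter_congr
        intro i _
        constructor
        · rintro ⟨-, h⟩; exact h
        · intro h; exact ⟨by rw [h]; exact hne, h⟩
      rw [hfe]
      simp only [smul_eq_mul, nsmul_eq_mul, mul_zero, add_zero]
      rw [← hN₁, ← hN₂, hy]
      field_simp
      ring
  have hrank := LinearMap.finrank_range_add_finrank_ker (Lmap s)
  rw [LinearMap.range_eq_top.mpr hLsurj] at hrank
  have htop : Module.finrank ℝ (⊤ : Submodule ℝ (ℝ × ℝ)) = 2 := by
    rw [finrank_top]; simp
  have hpi : Module.finrank ℝ (Quotient s → ℝ) = Fintype.card (Quotient s) :=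
    Module.finrank_pi ℝ
  rw [htop, hpi] at hrank
  rw [(LinearEquiv.ofBijective e hbij).symm.finrank_eq, hmcard]
  omega

end StmtAux

/-- the dimension of the affine span of the open cell `C(p)` is `m - 2`,
where `m ≥ 2` is the number of equivalence classes of `∼_p`. -/
theorem stmt1 {n : ℕ} (hn : 1 ≤ n) (μ : Fin (n + 1) → Fin (n + 1) → ℕ)
    (hsym : ∀ i j, μ i j = μ j i) (hloop : ∀ i, μ i i = 0)
    (hconn : ConnectedOn μ Set.univ)
    (p : Fin (n + 1) → ℝ) (hp : p ∈ U n)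
    (m : ℕ) (hm : m = (Set.range fun i : Fin (n + 1) => {j | pEquiv μ p i j}).ncard) :
    2 ≤ m ∧ Module.finrank ℝ (vectorSpan ℝ (openCell μ p)) = m - 2 := by
  obtain ⟨hm2, hdim⟩ := finrank_V0 hsym hp m hm
  rw [vectorSpan_openCell_eq hsym hp]
  exact ⟨hm2, hdim⟩
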